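/- Let Γ be a group, K a field, ρ₀ : Γ → GL_n(K) a group homomorphism, and γ₁, …, γ_N ∈ Γ fixed elements. Under the bijection between kernel-conjugacy classes of homomorphisms ρ : Γ → GL_n(K[ε]) lifting ρ₀ and cohomology classes of 1-cocycles α for the adjoint action, the lifts ρ satisfying the condition that ρ(γ_i) is GL_n(K[ε])-conjugate to ρ₀(γ_i) for every i = 1, …, N correspond exactly to the classes of cocycles α such that for each i there exists ξ_i ∈ M_n(K) with α(γ_i) = ξ_i − ρ₀(γ_i)·ξ_i·ρ₀(γ_i)⁻¹ (i.e., the restriction of the class of α to each cyclic subgroup generated by γ_i is trivial). -/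
import Mathlib


open Matrix DualNumber

/-- The canonical inclusion of matrices over `K` into matrices over `K[ε]`. -/
noncomputable def inclM (K : Type*) [Field K] (n : ℕ) :
    Matrix (Fin n) (Fin n) K →+* Matrix (Fin n) (Fin n) (DualNumber K) :=
  RingHom.mapMatrix (algebraMap K (DualNumber K))

/-- The canonical inclusion `GL_n(K) → GL_n(K[ε])`. -/
noncomputable def inclGL (K : Type*) [Field K] (n : ℕ) :
    GL (Fin n) K →* GL (Fin n) (DualNumber K) :=
  Units.map (RingHom.mapMatrix (algebraMap K (DualNumber K))).toMonoidHom

section helpers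
variable (K : Type*) [Field K] (n : ℕ)

/-- entrywise `fst`, as a ring hom. -/
noncomputable def mfHom : Matrix (Fin n) (Fin n) (DualNumber K) →+* Matrix (Fin n) (Fin n) K :=
  RingHom.mapMatrix (TrivSqZeroExt.fstHom K K K).toRingHom

/-- entrywise `snd`. -/
def ms (X : Matrix (Fin n) (Fin n) (DualNumber K)) : Matrix (Fin n) (Fin n) K :=
  X.map TrivSqZeroExt.snd

variable {K n}

lemma mfHom_apply (X : Matrix (Fin n) (Fin n) (DualNumber K)) (i j : Fin n) :
    mfHom K n X i j = (X i j).fst := rfl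

lemma ms_add (X Y : Matrix (Fin n) (Fin n) (DualNumber K)) : ms K n (X + Y) = ms K n X + ms K n Y := by
  ext i j; simp [ms]

lemma ms_one : ms K n 1 = 0 := by
  ext i j; by_cases h : i = j <;> simp [ms, Matrix.one_apply, h]

lemma ms_mul (X Y : Matrix (Fin n) (Fin n) (DualNumber K)) :
    ms K n (X * Y) = mfHom K n X * ms K n Y + ms K n X * mfHom K n Y := by
  ext i j
  simp [ms, Matrix.mul_apply, mfHom_apply, TrivSqZeroExt.snd_sum, DualNumber.snd_mul,
    Finset.sum_add_distrib]

lemma mfHom_inclM (a : Matrix (Fin n) (Fin n) K) : mfHom K n (inclM K n a) = a := by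
  ext i j; simp [mfHom_apply, inclM, TrivSqZeroExt.algebraMap_eq_inl']

lemma ms_inclM (a : Matrix (Fin n) (Fin n) K) : ms K n (inclM K n a) = 0 := by
  ext i j
  simp [ms, inclM, TrivSqZeroExt.algebraMap_eq_inl']

lemma mfHom_eps_smul (X : Matrix (Fin n) (Fin n) (DualNumber K)) :
    mfHom K n ((ε : DualNumber K) • X) = 0 := by
  ext i j; simp [mfHom_apply]

lemma ms_eps_smul (X : Matrix (Fin n) (Fin n) (DualNumber K)) :
    ms K n ((ε : DualNumber K) • X) = mfHom K n X := by
  ext i j; simp [ms, mfHom_apply]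

end helpers

set_option maxHeartbeats 1000000 in
/-- let `α` be a 1-cocycle for the adjoint action of `ρ₀`, and let `F` be the
associated lift `ρ_α(γ) = (1 + ε·α(γ))·ρ₀(γ)` of `ρ₀` to `GL_n(K[ε])`.  Given fixed
elements `γ₁, …, γ_N` of `Γ`, the lift `F` satisfies "`F(γᵢ)` is `GL_n(K[ε])`-conjugate to
`ρ₀(γᵢ)` for every `i`" if and only if for each `i` there is `ξᵢ ∈ M_n(K)` with
`α(γᵢ) = ξᵢ − ρ₀(γᵢ)·ξᵢ·ρ₀(γᵢ)⁻¹`, i.e. the restriction of the class of `α` to each cyclic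
subgroup `⟨γᵢ⟩` is trivial. -/
theorem stmt_6 (K : Type*) [Field K] (n : ℕ) (Γ : Type*) [Group Γ]
    (ρ₀ : Γ →* GL (Fin n) K) (N : ℕ) (γs : Fin N → Γ)
    (α : Γ → Matrix (Fin n) (Fin n) K)
    (hα : ∀ γ β : Γ, α (γ * β) =
      α γ + (ρ₀ γ : Matrix (Fin n) (Fin n) K) * α β *
        ((ρ₀ γ)⁻¹ : Matrix (Fin n) (Fin n) K))
    (F : Γ →* GL (Fin n) (DualNumber K))
    (hF : ∀ γ : Γ, (F γ : Matrix (Fin n) (Fin n) (DualNumber K)) =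
      (1 + (DualNumber.eps : DualNumber K) • inclM K n (α γ)) *
        inclM K n (ρ₀ γ : Matrix (Fin n) (Fin n) K)) :
    (∀ i : Fin N, ∃ u : GL (Fin n) (DualNumber K),
        F (γs i) = u * inclGL K n (ρ₀ (γs i)) * u⁻¹) ↔
      (∀ i : Fin N, ∃ ξ : Matrix (Fin n) (Fin n) K,
        α (γs i) = ξ - (ρ₀ (γs i) : Matrix (Fin n) (Fin n) K) * ξ *
          ((ρ₀ (γs i))⁻¹ : Matrix (Fin n) (Fin n) K)) := by
  constructor
  · intro h i
    obtain ⟨u, hu⟩ := h i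
    set γ := γs i with hγ
    set A : Matrix (Fin n) (Fin n) K := (ρ₀ γ : Matrix (Fin n) (Fin n) K) with hA
    set B : Matrix (Fin n) (Fin n) K := ((ρ₀ γ)⁻¹ : Matrix (Fin n) (Fin n) K) with hB
    have hAB : A * B = 1 := by
      rw [hA, hB, ← Matrix.coe_units_inv, ← Units.val_mul, mul_inv_cancel, Units.val_one]
    have hBA : B * A = 1 := by
      rw [hA, hB, ← Matrix.coe_units_inv, ← Units.val_mul, inv_mul_cancel, Units.val_one]
    -- matrix-level equation
    have h1 : F γ * u = u * inclGL K n (ρ₀ γ) := by rw [hu]; group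
    have h2 : (F γ : Matrix (Fin n) (Fin n) (DualNumber K)) * (u : Matrix (Fin n) (Fin n) (DualNumber K)) =
        (u : Matrix (Fin n) (Fin n) (DualNumber K)) * inclM K n A := by
      have := congrArg (Units.val) h1
      simpa [Units.val_mul, inclGL, inclM] using this
    rw [hF γ] at h2
    set U : Matrix (Fin n) (Fin n) (DualNumber K) := (u : Matrix (Fin n) (Fin n) (DualNumber K)) with hU
    set a : Matrix (Fin n) (Fin n) K := α γ with ha
    -- fst part
    have hfst : A * mfHom K n U = mfHom K n U * A := by
      have := congrArg (mfHom K n) h2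
      simpa [_root_.map_mul, _root_.map_add, _root_.map_one, mfHom_eps_smul, mfHom_inclM] using this
    -- snd part
    have hsnd : A * ms K n U + a * A * mfHom K n U = ms K n U * A := by
      have := congrArg (ms K n) h2
      simpa [ms_mul, ms_add, ms_one, ms_inclM, ms_eps_smul, mfHom_eps_smul, mfHom_inclM,
        _root_.map_add, _root_.map_one, add_mul, one_mul, mul_assoc] using this
    -- U₀ is invertible
    set u₀ : GL (Fin n) K := Units.map (mfHom K n).toMonoidHom u with hu₀
    have hu₀v : (u₀ : Matrix (Fin n) (Fin n) K) = mfHom K n U := rfl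
    set V : Matrix (Fin n) (Fin n) K := ((u₀⁻¹ : GL (Fin n) K) : Matrix (Fin n) (Fin n) K) with hV
    set U₀ : Matrix (Fin n) (Fin n) K := mfHom K n U with hU₀
    set U₁ : Matrix (Fin n) (Fin n) K := ms K n U with hU₁
    have hU₀V : U₀ * V = 1 := by rw [← hu₀v]; exact Units.mul_inv _
    have hVU₀ : V * U₀ = 1 := by rw [← hu₀v]; exact Units.inv_mul _
    have hVA : V * A = A * V := by
      calc V * A = V * A * (U₀ * V) := by rw [hU₀V, mul_one]
        _ = V * (A * U₀) * V := by simp [mul_assoc]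
        _ = V * (U₀ * A) * V := by rw [hfst]
        _ = (V * U₀) * (A * V) := by simp [mul_assoc]
        _ = A * V := by rw [hVU₀, one_mul]
    have h4 : a * A * U₀ = U₁ * A - A * U₁ := by
      rw [eq_sub_iff_add_eq, add_comm]; exact hsnd
    refine ⟨U₁ * V, ?_⟩
    have h5 : a * A * U₀ * (V * B) = (U₁ * A - A * U₁) * (V * B) := by rw [h4]
    have e1 : U₁ * A * (V * B) = U₁ * V := by
      calc U₁ * A * (V * B) = U₁ * ((A * V) * B) := by rw [mul_assoc, mul_assoc]
        _ = U₁ * ((V * A) * B) := by rw [hVA]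
        _ = U₁ * (V * (A * B)) := by rw [mul_assoc]
        _ = U₁ * V := by rw [hAB, mul_one]
    have e2 : A * U₁ * (V * B) = A * (U₁ * V) * B := by
      simp only [mul_assoc]
    calc a = a * A * U₀ * (V * B) := by
          rw [mul_assoc (a * A) U₀ (V * B), ← mul_assoc U₀ V B, hU₀V, one_mul,
            mul_assoc a A B, hAB, mul_one]
      _ = (U₁ * A - A * U₁) * (V * B) := h5
      _ = U₁ * A * (V * B) - A * U₁ * (V * B) := by rw [sub_mul]
      _ = U₁ * V - A * (U₁ * V) * B := by rw [e1, e2]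
  · intro h i
    obtain ⟨ξ, hξ⟩ := h i
    set γ := γs i with hγ
    set A : Matrix (Fin n) (Fin n) K := (ρ₀ γ : Matrix (Fin n) (Fin n) K) with hA
    set B : Matrix (Fin n) (Fin n) K := ((ρ₀ γ)⁻¹ : Matrix (Fin n) (Fin n) K) with hB
    have hAB : A * B = 1 := by
      rw [hA, hB, ← Matrix.coe_units_inv, ← Units.val_mul, mul_inv_cancel, Units.val_one]
    have hBA : B * A = 1 := by
      rw [hA, hB, ← Matrix.coe_units_inv, ← Units.val_mul, inv_mul_cancel, Units.val_one]
    set x : Matrix (Fin n) (Fin n) (DualNumber K) := (ε : DualNumber K) • inclM K n ξ with hx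
    have hx2 : x * x = 0 := by
      rw [hx, smul_mul_assoc, mul_smul_comm, smul_smul, DualNumber.eps_mul_eps, zero_smul]
    have hinv1 : (1 + x) * (1 - x) = 1 := by
      have : (1 + x) * (1 - x) = 1 - x * x := by noncomm_ring
      rw [this, hx2, sub_zero]
    have hinv2 : (1 - x) * (1 + x) = 1 := by
      have : (1 - x) * (1 + x) = 1 - x * x := by noncomm_ring
      rw [this, hx2, sub_zero]
    set w : GL (Fin n) (DualNumber K) := ⟨1 + x, 1 - x, hinv1, hinv2⟩ with hw
    refine ⟨w, Units.ext ?_⟩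
    have hw1 : (w : Matrix (Fin n) (Fin n) (DualNumber K)) = 1 + x := rfl
    have hw2 : ((w⁻¹ : GL (Fin n) (DualNumber K)) : Matrix (Fin n) (Fin n) (DualNumber K)) = 1 - x := rfl
    have hg : ((inclGL K n (ρ₀ γ) : GL (Fin n) (DualNumber K)) : Matrix (Fin n) (Fin n) (DualNumber K)) = inclM K n A := rfl
    rw [Units.val_mul, Units.val_mul, hw1, hw2, hg, hF γ]
    have key : inclM K n (α γ) * inclM K n A = inclM K n ξ * inclM K n A - inclM K n A * inclM K n ξ := by
      rw [← _root_.map_mul, ← _root_.map_mul, ← _root_.map_mul, ← _root_.map_sub]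
      congr 1
      rw [hξ, sub_mul, mul_assoc (A * ξ) B A, hBA, mul_one]
    have hxAx : x * inclM K n A * x = 0 := by
      rw [hx, smul_mul_assoc, smul_mul_assoc, mul_smul_comm, smul_smul,
        DualNumber.eps_mul_eps, zero_smul]
    calc (1 + (ε : DualNumber K) • inclM K n (α γ)) * inclM K n A
        = inclM K n A + (ε : DualNumber K) • (inclM K n (α γ) * inclM K n A) := by
          rw [add_mul, one_mul, smul_mul_assoc]
      _ = inclM K n A + (ε : DualNumber K) • (inclM K n ξ * inclM K n A - inclM K n A * inclM K n ξ) := by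
          rw [key]
      _ = inclM K n A + (x * inclM K n A - inclM K n A * x) := by
          rw [hx, smul_sub, smul_mul_assoc, mul_smul_comm]
      _ = (1 + x) * inclM K n A * (1 - x) := by
          have expand : (1 + x) * inclM K n A * (1 - x) =
              inclM K n A + (x * inclM K n A - inclM K n A * x) - x * inclM K n A * x := by
            noncomm_ring
          rw [expand, hxAx, sub_zero]
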